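/- Let I be an interval with inf I = 0 and f : I → ℝ continuous strictly monotone. If there exists ε ∈ I such that A_f restricted to (0,ε) is a Hardy mean, then there exists a function c_f : I → (0,∞) such that Σₙ A_f(a₁,…,aₙ) ≤ c_f(‖a‖_∞)·Σₙ aₙ for every sequence (aₙ) in I with Σ aₙ < ∞. -/

import Mathlib

/-- The quasi-arithmetic mean generated by `f`, the inverse being taken on `I`. -/
noncomputable def qam (f : ℝ → ℝ) (I : Set ℝ) (n : ℕ) (a : Fin n → ℝ) : ℝ :=
  Function.invFunOn f I ((∑ i, f (a i)) / n)

open Finset Filter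

lemma exists_preimage_avg {I : Set ℝ} (hconn : I.OrdConnected) {f : ℝ → ℝ}
    (hf : ContinuousOn f I) (a : ℕ → ℝ) (ha : ∀ i, a i ∈ I) (n : ℕ) :
    ∃ z ∈ I, f z = (∑ i ∈ Finset.range (n+1), f (a i)) / ((n:ℝ)+1) := by
  obtain ⟨i₀, hi₀, hmin⟩ := Finset.exists_min_image (Finset.range (n+1))
    (fun i => f (a i)) ⟨0, by simp⟩
  obtain ⟨i₁, hi₁, hmax⟩ := Finset.exists_max_image (Finset.range (n+1))
    (fun i => f (a i)) ⟨0, by simp⟩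
  have h1 := Finset.card_nsmul_le_sum (Finset.range (n+1)) (fun i => f (a i)) (f (a i₀))
    (fun i hi => hmin i hi)
  have h2 := Finset.sum_le_card_nsmul (Finset.range (n+1)) (fun i => f (a i)) (f (a i₁))
    (fun i hi => hmax i hi)
  rw [Finset.card_range, nsmul_eq_mul] at h1 h2
  push_cast at h1 h2
  have hn : (0:ℝ) < (n:ℝ)+1 := by positivity
  have hlow : f (a i₀) ≤ (∑ i ∈ Finset.range (n+1), f (a i)) / ((n:ℝ)+1) := by
    rw [le_div_iff₀ hn]; linarith
  have hhigh : (∑ i ∈ Finset.range (n+1), f (a i)) / ((n:ℝ)+1) ≤ f (a i₁) := by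
    rw [div_le_iff₀ hn]; linarith
  have himg : (f '' I).OrdConnected := (hconn.isPreconnected.image f hf).ordConnected
  have hvmem : (∑ i ∈ Finset.range (n+1), f (a i)) / ((n:ℝ)+1) ∈ f '' I :=
    himg.out (Set.mem_image_of_mem f (ha i₀)) (Set.mem_image_of_mem f (ha i₁)) ⟨hlow, hhigh⟩
  obtain ⟨z, hz, hfz⟩ := hvmem
  exact ⟨z, hz, hfz⟩

lemma qam_prefix_spec {I : Set ℝ} (hconn : I.OrdConnected) {f : ℝ → ℝ}
    (hf : ContinuousOn f I) (a : ℕ → ℝ) (ha : ∀ i, a i ∈ I) (n : ℕ) :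
    qam f I (n+1) (fun k : Fin (n+1) => a (k:ℕ)) ∈ I ∧
      f (qam f I (n+1) (fun k : Fin (n+1) => a (k:ℕ)))
        = (∑ i ∈ Finset.range (n+1), f (a i)) / ((n:ℝ)+1) := by
  obtain ⟨z, hzI, hfz⟩ := exists_preimage_avg hconn hf a ha n
  have hv : ((∑ i : Fin (n+1), f (a (i:ℕ))) / ((n+1 : ℕ):ℝ))
      = (∑ i ∈ Finset.range (n+1), f (a i)) / ((n:ℝ)+1) := by
    rw [Fin.sum_univ_eq_sum_range (fun i => f (a i)) (n+1)]; push_cast; ring_nf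
  have hex : ∃ u ∈ I, f u = (∑ i : Fin (n+1), f (a (i:ℕ))) / ((n+1 : ℕ):ℝ) :=
    ⟨z, hzI, by rw [hv]; exact hfz⟩
  unfold qam
  exact ⟨Function.invFunOn_mem hex, by rw [Function.invFunOn_eq hex, hv]⟩

lemma qam_neg_eq {I : Set ℝ} (hconn : I.OrdConnected) {f : ℝ → ℝ}
    (hf : ContinuousOn f I) (hinj : Set.InjOn f I) (a : ℕ → ℝ) (ha : ∀ i, a i ∈ I) (n : ℕ) :
    qam (fun y => -f y) I (n+1) (fun k : Fin (n+1) => a (k:ℕ))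
      = qam f I (n+1) (fun k : Fin (n+1) => a (k:ℕ)) := by
  obtain ⟨hgI, hgeq⟩ := qam_prefix_spec hconn (hf.neg) a ha n
  obtain ⟨hfI, hfeq⟩ := qam_prefix_spec hconn hf a ha n
  apply hinj hgI hfI
  rw [hfeq]
  have : -f (qam (-f) I (n+1) (fun k : Fin (n+1) => a (k:ℕ)))
      = (∑ i ∈ Finset.range (n+1), -f (a i)) / ((n:ℝ)+1) := hgeq
  rw [Finset.sum_neg_distrib, neg_div] at this
  linarith

lemma Ioo_subset_of_sInf {I : Set ℝ} (hne : I.Nonempty) (hconn : I.OrdConnected)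
    (hIpos : I ⊆ Set.Ioi 0) (hInf : sInf I = 0) {ε : ℝ} (hε : ε ∈ I) :
    Set.Ioo (0:ℝ) ε ⊆ I := by
  intro y hy
  have hbdd : BddBelow I := ⟨0, fun z hz => (hIpos hz).le⟩
  have h1 : sInf I < y := by rw [hInf]; exact hy.1
  obtain ⟨z, hzI, hzy⟩ := (csInf_lt_iff hbdd hne).mp h1
  exact hconn.out hzI hε ⟨hzy.le, hy.2.le⟩

theorem mono_main (I : Set ℝ) (hne : I.Nonempty) (hconn : I.OrdConnected)
    (hIpos : I ⊆ Set.Ioi 0) (hInf : sInf I = 0)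
    (f : ℝ → ℝ) (hf : ContinuousOn f I)
    (hmono : StrictMonoOn f I)
    (ε : ℝ) (hε : ε ∈ I)
    (hH : ∃ C : ℝ, ∀ a : ℕ → ℝ, (∀ n, a n ∈ Set.Ioo (0:ℝ) ε) → Summable a →
      Summable (fun n => qam f I (n + 1) (fun k : Fin (n + 1) => a (k : ℕ))) ∧
      ∑' n, qam f I (n + 1) (fun k : Fin (n + 1) => a (k : ℕ)) ≤ C * ∑' n, a n) :
    ∃ c : ℝ → ℝ, (∀ x ∈ I, 0 < c x) ∧
      ∀ a : ℕ → ℝ, (∀ n, a n ∈ I) → Summable a →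
        Summable (fun n => qam f I (n + 1) (fun k : Fin (n + 1) => a (k : ℕ))) ∧
        ∑' n, qam f I (n + 1) (fun k : Fin (n + 1) => a (k : ℕ)) ≤
          c (⨆ n, a n) * ∑' n, a n := by
  obtain ⟨C₀, hC⟩ := hH
  have hεpos : 0 < ε := hIpos hε
  have hIoo : Set.Ioo (0:ℝ) ε ⊆ I := Ioo_subset_of_sInf hne hconn hIpos hInf hε
  set ε' : ℝ := ε/2 with hε'def
  set t : ℝ := 3*ε/4 with htdef
  have hε'mem : ε' ∈ Set.Ioo (0:ℝ) ε := ⟨by rw [hε'def]; linarith, by rw [hε'def]; linarith⟩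
  have htmem : t ∈ Set.Ioo (0:ℝ) ε := ⟨by rw [htdef]; linarith, by rw [htdef]; linarith⟩
  have hε'I : ε' ∈ I := hIoo hε'mem
  have htI : t ∈ I := hIoo htmem
  have hε't : ε' < t := by rw [hε'def, htdef]; linarith
  set γ : ℝ := f t - f ε' with hγdef
  have hγ : 0 < γ := sub_pos.mpr (hmono hε'I htI hε't)
  set C : ℝ := max C₀ 0 + 1 with hCdef
  have hC1 : (1:ℝ) ≤ C := by rw [hCdef]; have := le_max_right C₀ 0; linarith
  have hC₀C : C₀ ≤ C := by rw [hCdef]; have := le_max_left C₀ 0; linarith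
  set m : ℝ → ℕ := fun x => ⌈(max (f x - f ε') 0)/γ⌉₊ + 1 with hmdef
  refine ⟨fun x => (((m x : ℝ))^2 * x + C * (m x) * t)/ε' + C, ?_, ?_⟩
  · intro x hx
    have hx0 : 0 < x := hIpos hx
    have hm1 : (1:ℝ) ≤ (m x : ℝ) := by
      have : 1 ≤ m x := Nat.le_add_left 1 _
      exact_mod_cast this
    have ht0 : (0:ℝ) < t := htmem.1
    have hε'0 : (0:ℝ) < ε' := hε'mem.1
    have : (0:ℝ) < ((m x : ℝ))^2 * x + C * (m x) * t := by positivity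
    have : (0:ℝ) < (((m x : ℝ))^2 * x + C * (m x) * t)/ε' := by positivity
    linarith
  · intro a ha hsum
    have hapos : ∀ i, 0 < a i := fun i => hIpos (ha i)
    have htend : Tendsto a atTop (nhds 0) := hsum.tendsto_atTop_zero
    -- the big set is finite
    have hev : ∀ᶠ i in atTop, a i < ε' := htend.eventually_lt_const hε'mem.1
    have hfin : {i : ℕ | ε' ≤ a i}.Finite := by
      rw [← Nat.cofinite_eq_atTop] at hev
      have h := Filter.eventually_cofinite.mp hev
      convert h using 1
      ext i; simp [not_lt]
    set F := hfin.toFinset with hFdef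
    obtain ⟨N, hNdef⟩ : ∃ k : ℕ, k = F.card := ⟨_, rfl⟩
    -- the supremum is attained
    set x := ⨆ n, a n with hxdef
    have hev0 : ∀ᶠ i in atTop, a i < a 0 := htend.eventually_lt_const (hapos 0)
    have hfin0 : {i : ℕ | a 0 ≤ a i}.Finite := by
      rw [← Nat.cofinite_eq_atTop] at hev0
      have h := Filter.eventually_cofinite.mp hev0
      convert h using 1
      ext i; simp [not_lt]
    have h0mem : 0 ∈ hfin0.toFinset := by simp [Set.Finite.mem_toFinset]
    obtain ⟨i₁, hi₁, hmax⟩ := Finset.exists_max_image hfin0.toFinset a ⟨0, h0mem⟩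
    have hub : ∀ i, a i ≤ a i₁ := by
      intro i
      by_cases h : a 0 ≤ a i
      · exact hmax i (by simpa [Set.Finite.mem_toFinset] using h)
      · have h0le : a 0 ≤ a i₁ := hmax 0 h0mem
        push_neg at h
        linarith
    have hxa : x = a i₁ := le_antisymm (ciSup_le hub)
      (le_ciSup ⟨a i₁, by rintro y ⟨i, rfl⟩; exact hub i⟩ i₁)
    have hxI : x ∈ I := hxa ▸ ha i₁
    have hax : ∀ i, a i ≤ x := fun i => hxa ▸ hub i
    have hxpos : 0 < x := hIpos hxI
    -- constants
    set Δ : ℝ := max (f x - f ε') 0 with hΔdef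
    have hΔ0 : 0 ≤ Δ := le_max_right _ _
    obtain ⟨mx, hmxeq⟩ : ∃ k : ℕ, k = m x := ⟨_, rfl⟩
    have hmxx : mx = ⌈Δ/γ⌉₊ + 1 := by
      rw [hmxeq]
    have hmx1 : 1 ≤ mx := by rw [hmxx]; exact Nat.le_add_left 1 _
    have hmx1' : (1:ℝ) ≤ (mx:ℝ) := by exact_mod_cast hmx1
    have hΔle : Δ ≤ ((mx:ℝ) - 1) * γ := by
      have h1 : Δ/γ ≤ ((⌈Δ/γ⌉₊ : ℕ) : ℝ) := Nat.le_ceil _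
      have h2 : ((mx:ℝ) - 1) = ((⌈Δ/γ⌉₊ : ℕ) : ℝ) := by
        rw [hmxx, Nat.cast_add, Nat.cast_one]; ring
      rw [h2]
      rw [div_le_iff₀ hγ] at h1
      linarith
    obtain ⟨K, hKdef⟩ : ∃ k : ℕ, k = N * mx := ⟨_, rfl⟩
    -- the comparison sequence
    set cs : ℕ → ℝ := fun i => if i < K then t else min (a (i - K)) ε' with hcsdef
    have hcsmem : ∀ i, cs i ∈ Set.Ioo (0:ℝ) ε := by
      intro i
      by_cases h : i < K
      · simpa [hcsdef, h] using htmem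
      · simp only [hcsdef, h, if_false]
        exact ⟨lt_min (hapos _) hε'mem.1, lt_of_le_of_lt (min_le_right _ _) hε'mem.2⟩
    have hminsum : Summable (fun i => min (a i) ε') :=
      Summable.of_nonneg_of_le (fun i => (lt_min (hapos i) hε'mem.1).le)
        (fun i => min_le_left _ _) hsum
    have hcssum : Summable cs := by
      apply (summable_nat_add_iff K).mp
      have : (fun i => cs (i + K)) = fun i => min (a i) ε' := by
        funext i
        simp only [hcsdef]
        rw [if_neg (by omega), Nat.add_sub_cancel]
      rw [this]
      exact hminsum
    obtain ⟨hCsummable, hCbound⟩ := hC cs hcsmem hcssum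
    -- specs
    have hcsI : ∀ i, cs i ∈ I := fun i => hIoo (hcsmem i)
    have specA := fun n => qam_prefix_spec hconn hf a ha n
    have specC := fun n => qam_prefix_spec hconn hf cs hcsI n
    set Aq : ℕ → ℝ := fun n => qam f I (n+1) (fun k : Fin (n+1) => a (k:ℕ)) with hAdef
    set Cq : ℕ → ℝ := fun r => qam f I (r+1) (fun k : Fin (r+1) => cs (k:ℕ)) with hCqdef
    have hApos : ∀ n, 0 < Aq n := fun n => hIpos (specA n).1
    have hCpos : ∀ r, 0 < Cq r := fun r => hIpos (specC r).1
    -- Claim B : Aq n ≤ x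
    have hAx : ∀ n, Aq n ≤ x := by
      intro n
      obtain ⟨hmem, hfeq⟩ := specA n
      have : f (Aq n) ≤ f x := by
        rw [hfeq, div_le_iff₀ (by positivity)]
        calc ∑ i ∈ range (n+1), f (a i) ≤ ∑ _i ∈ range (n+1), f x :=
              sum_le_sum (fun i _ => (hmono.le_iff_le (ha i) hxI).mpr (hax i))
          _ = ((n:ℝ)+1) * f x := by rw [sum_const, card_range, nsmul_eq_mul]; push_cast; ring
          _ = f x * ((n:ℝ)+1) := by ring
      exact (hmono.le_iff_le hmem hxI).mp this
    -- Claim A : comparison with the auxiliary sequence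
    have hkey : ∀ n : ℕ, (N * mx^2 : ℕ) ≤ n + 1 → Aq n ≤ Cq (K + n) := by
      intro n hn
      obtain ⟨hAmem, hAeq⟩ := specA n
      obtain ⟨hCmem, hCeq⟩ := specC (K + n)
      have hsplit : ∑ i ∈ range (K + n + 1), f (cs i)
          = (K:ℝ) * f t + ∑ i ∈ range (n+1), f (min (a i) ε') := by
        have h0 : K + n + 1 = K + (n + 1) := by omega
        have hcs1 : ∀ i, i < K → cs i = t := by
          intro i hi; simp only [hcsdef]; rw [if_pos hi]
        have hcs2 : ∀ i : ℕ, cs (K + i) = min (a i) ε' := by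
          intro i; simp only [hcsdef]; rw [if_neg (by omega), Nat.add_sub_cancel_left]
        rw [h0, Finset.sum_range_add]
        congr 1
        · calc ∑ i ∈ range K, f (cs i) = ∑ _i ∈ range K, f t :=
                Finset.sum_congr rfl (fun i hi => by rw [hcs1 i (Finset.mem_range.mp hi)])
            _ = (K:ℝ) * f t := by rw [sum_const, card_range, nsmul_eq_mul]
        · exact Finset.sum_congr rfl (fun i _ => by rw [hcs2 i])
      set S : ℝ := ∑ i ∈ range (n+1), f (a i) with hSdef
      set S' : ℝ := ∑ i ∈ range (n+1), f (min (a i) ε') with hS'def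
      have hS : S ≤ S' + (N:ℝ) * Δ := by
        have hdiff : S - S' ≤ ∑ i ∈ range (n+1), (if ε' ≤ a i then Δ else 0) := by
          rw [hSdef, hS'def, ← Finset.sum_sub_distrib]
          apply sum_le_sum
          intro i _
          by_cases h : ε' ≤ a i
          · rw [if_pos h, min_eq_right h]
            have h1 : f (a i) ≤ f x := (hmono.le_iff_le (ha i) hxI).mpr (hax i)
            have h2 : f x - f ε' ≤ Δ := le_max_left _ _
            linarith
          · push_neg at h
            rw [if_neg (not_le.mpr h), min_eq_left h.le]
            simp
        have hcard : ∑ i ∈ range (n+1), (if ε' ≤ a i then Δ else 0) ≤ (N:ℝ) * Δ := by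
          rw [Finset.sum_ite, Finset.sum_const_zero, add_zero, Finset.sum_const, nsmul_eq_mul]
          have hsub : (range (n+1)).filter (fun i => ε' ≤ a i) ⊆ F := by
            intro i hi
            rw [hFdef, Set.Finite.mem_toFinset]
            exact (Finset.mem_filter.mp hi).2
          have hle := Finset.card_le_card hsub
          rw [← hNdef] at hle
          have hcc : (((range (n+1)).filter (fun i => ε' ≤ a i)).card : ℝ) ≤ (N:ℝ) :=
            Nat.cast_le.mpr hle
          exact mul_le_mul_of_nonneg_right hcc hΔ0
        linarith
      have hS' : S' ≤ ((n:ℝ)+1) * f ε' := by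
        rw [hS'def]
        calc ∑ i ∈ range (n+1), f (min (a i) ε') ≤ ∑ _i ∈ range (n+1), f ε' := by
              apply sum_le_sum
              intro i _
              by_cases h : ε' ≤ a i
              · rw [min_eq_right h]
              · push_neg at h
                rw [min_eq_left h.le]
                exact (hmono.le_iff_le (ha i) hε'I).mpr h.le
          _ = ((n:ℝ)+1) * f ε' := by rw [sum_const, card_range, nsmul_eq_mul]; push_cast; ring
      have hd1 : (0:ℝ) < (n:ℝ) + 1 := by positivity
      have hd2 : (0:ℝ) < ((K + n : ℕ):ℝ) + 1 := by
        have : (0:ℝ) ≤ ((K + n : ℕ):ℝ) := Nat.cast_nonneg _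
        linarith
      have hgoal : f (qam f I (n+1) fun k : Fin (n+1) => a (k:ℕ))
          ≤ f (qam f I (K+n+1) fun k : Fin (K+n+1) => cs (k:ℕ)) := by
        rw [hAeq, hCeq, hsplit, div_le_div_iff₀ hd1 hd2]
        have hncast : ((N:ℝ)) * (mx:ℝ)^2 ≤ (n:ℝ) + 1 := by
          have h1 : ((N * mx^2 : ℕ) : ℝ) ≤ ((n+1 : ℕ) : ℝ) := Nat.cast_le.mpr hn
          rw [Nat.cast_mul, Nat.cast_pow, Nat.cast_add, Nat.cast_one] at h1
          exact h1
        have hKcast : (K:ℝ) = (N:ℝ) * (mx:ℝ) := by rw [hKdef, Nat.cast_mul]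
        have hKn : ((K + n : ℕ):ℝ) + 1 = (K:ℝ) + ((n:ℝ) + 1) := by
          rw [Nat.cast_add]; ring
        rw [hKn, hKcast]
        have hN0 : (0:ℝ) ≤ (N:ℝ) := Nat.cast_nonneg _
        have hft : f t = f ε' + γ := by rw [hγdef]; ring
        set n1 : ℝ := (n:ℝ) + 1 with hn1def
        have hn1pos : (0:ℝ) < n1 := by rw [hn1def]; positivity
        set NN : ℝ := (N:ℝ) with hNNdef
        set M : ℝ := (mx:ℝ) with hMdef
        -- goal : S * (NN * M + n1) ≤ (NN * M * f t + S') * n1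
        have hM0 : (0:ℝ) ≤ M := by rw [hMdef]; exact Nat.cast_nonneg _
        have hNM0 : (0:ℝ) ≤ NN * M := mul_nonneg hN0 hM0
        have hNMn1 : (0:ℝ) ≤ NN * M + n1 := by linarith
        have hDle : NN * Δ ≤ NN * ((M - 1) * γ) := mul_le_mul_of_nonneg_left hΔle hN0
        have e1 : S * (NN * M + n1) ≤ (S' + NN * Δ) * (NN * M + n1) :=
          mul_le_mul_of_nonneg_right hS hNMn1
        have e2 : S' * (NN * M) ≤ (n1 * f ε') * (NN * M) :=
          mul_le_mul_of_nonneg_right hS' hNM0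
        have e3 : NN * Δ * (NN * M) ≤ NN * ((M - 1) * γ) * (NN * M) :=
          mul_le_mul_of_nonneg_right hDle hNM0
        have e4 : NN * Δ * n1 ≤ NN * ((M - 1) * γ) * n1 :=
          mul_le_mul_of_nonneg_right hDle hn1pos.le
        have e5 : NN * (NN * M^2) * γ ≤ NN * n1 * γ :=
          mul_le_mul_of_nonneg_right
            (mul_le_mul_of_nonneg_left hncast hN0) hγ.le
        have h6 : (0:ℝ) ≤ NN * NN * M * γ :=
          mul_nonneg (mul_nonneg (mul_nonneg hN0 hN0) hM0) hγ.le
        have e7 : NN * M * f t * n1 = NN * M * f ε' * n1 + NN * M * γ * n1 := by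
          rw [hft]; ring
        linarith [e1, e2, e3, e4, e5, h6, e7]
      have := (hmono.le_iff_le hAmem hCmem).mp hgoal
      simp only [hAdef, hCqdef]
      exact this
    -- partial sums of the means are bounded
    have hCtsum0 : (0:ℝ) ≤ ∑' r, Cq r := tsum_nonneg (fun r => (hCpos r).le)
    have hx0 : (0:ℝ) ≤ x := hxpos.le
    have hpartial : ∀ M' : ℕ,
        ∑ i ∈ range M', Aq i ≤ ((N * mx^2 : ℕ) : ℝ) * x + ∑' r, Cq r := by
      intro M'
      have hterm : ∀ i ∈ range M',
          Aq i ≤ (if i ∈ range (N * mx^2) then x else 0) + Cq (K + i) := by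
        intro i _
        by_cases h : i < N * mx^2
        · rw [if_pos (Finset.mem_range.mpr h)]
          have h1 := hAx i
          have h2 := hCpos (K + i)
          linarith
        · rw [if_neg (fun hc => h (Finset.mem_range.mp hc))]
          have h1 := hkey i (by omega)
          linarith
      calc ∑ i ∈ range M', Aq i
          ≤ ∑ i ∈ range M', ((if i ∈ range (N * mx^2) then x else 0) + Cq (K + i)) :=
            sum_le_sum hterm
        _ = (∑ i ∈ range M', (if i ∈ range (N * mx^2) then x else 0))
            + ∑ i ∈ range M', Cq (K + i) := Finset.sum_add_distrib
        _ ≤ ((N * mx^2 : ℕ) : ℝ) * x + ∑' r, Cq r := by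
            gcongr
            · rw [Finset.sum_ite_mem]
              calc ∑ _i ∈ range M' ∩ range (N * mx^2), x
                  = ((range M' ∩ range (N * mx^2)).card : ℝ) * x := by
                    rw [sum_const, nsmul_eq_mul]
                _ ≤ ((N * mx^2 : ℕ) : ℝ) * x := by
                    apply mul_le_mul_of_nonneg_right _ hx0
                    have h1 : (range M' ∩ range (N * mx^2)).card ≤ N * mx^2 := by
                      calc (range M' ∩ range (N * mx^2)).card
                          ≤ (range (N * mx^2)).card :=
                            Finset.card_le_card (Finset.inter_subset_right)
                        _ = N * mx^2 := Finset.card_range _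
                    exact_mod_cast h1
            · have hinj : ∀ a₁ ∈ range M', ∀ a₂ ∈ range M', K + a₁ = K + a₂ → a₁ = a₂ := by
                intro a₁ _ a₂ _ h; omega
              calc ∑ i ∈ range M', Cq (K + i)
                  = ∑ j ∈ (range M').image (fun i => K + i), Cq j :=
                    (Finset.sum_image hinj).symm
                _ ≤ ∑' r, Cq r := Summable.sum_le_tsum _ (fun r _ => (hCpos r).le) hCsummable
    have hAsummable : Summable Aq :=
      summable_of_sum_range_le (fun n => (hApos n).le) hpartial
    have hAtsum : ∑' n, Aq n ≤ ((N * mx^2 : ℕ) : ℝ) * x + ∑' r, Cq r :=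
      Summable.tsum_le_of_sum_range_le hAsummable hpartial
    refine ⟨hAsummable, ?_⟩
    -- compute the sum of the comparison sequence
    have hcs0 : (0:ℝ) ≤ ∑' i, cs i := tsum_nonneg (fun i => (hcsmem i).1.le)
    have htsum_cs : ∑' i, cs i = (K:ℝ) * t + ∑' i, min (a i) ε' := by
      have h1 := Summable.sum_add_tsum_nat_add (f := cs) K hcssum
      have h2 : ∑ i ∈ range K, cs i = (K:ℝ) * t := by
        calc ∑ i ∈ range K, cs i = ∑ _i ∈ range K, t :=
              Finset.sum_congr rfl (fun i hi => by
                simp only [hcsdef]; rw [if_pos (Finset.mem_range.mp hi)])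
          _ = (K:ℝ) * t := by rw [sum_const, card_range, nsmul_eq_mul]
      have h3 : (fun i => cs (i + K)) = fun i => min (a i) ε' := by
        funext i
        simp only [hcsdef]
        rw [if_neg (by omega), Nat.add_sub_cancel]
      rw [h2, h3] at h1
      linarith
    have hmin_le : ∑' i, min (a i) ε' ≤ ∑' i, a i :=
      Summable.tsum_le_tsum (fun i => min_le_left _ _) hminsum hsum
    have hta0 : (0:ℝ) ≤ ∑' i, a i := tsum_nonneg (fun i => (hapos i).le)
    have hNb : (N:ℝ) * ε' ≤ ∑' i, a i := by
      have h1 : ∑ i ∈ F, (ε':ℝ) ≤ ∑ i ∈ F, a i := by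
        apply sum_le_sum
        intro i hi
        rw [hFdef, Set.Finite.mem_toFinset] at hi
        exact hi
      have h2 : ∑ i ∈ F, (ε':ℝ) = (N:ℝ) * ε' := by
        rw [sum_const, nsmul_eq_mul, hNdef]
      have h3 : ∑ i ∈ F, a i ≤ ∑' i, a i :=
        Summable.sum_le_tsum F (fun i _ => (hapos i).le) hsum
      linarith
    have hNle : (N:ℝ) ≤ (∑' i, a i) / ε' := by
      rw [le_div_iff₀ hε'mem.1]; exact hNb
    have hC0 : (0:ℝ) < C := by linarith
    have hEpos : (0:ℝ) ≤ (mx:ℝ)^2 * x + C * (mx:ℝ) * t := by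
      have h1 : (0:ℝ) ≤ (mx:ℝ)^2 * x := by positivity
      have h2 : (0:ℝ) ≤ C * (mx:ℝ) * t := by
        apply mul_nonneg (mul_nonneg hC0.le (Nat.cast_nonneg _)) htmem.1.le
      linarith
    have hNc : ((N * mx^2 : ℕ):ℝ) = (N:ℝ) * (mx:ℝ)^2 := by
      rw [Nat.cast_mul, Nat.cast_pow]
    have hKc : (K:ℝ) = (N:ℝ) * (mx:ℝ) := by rw [hKdef, Nat.cast_mul]
    have h8 : (N:ℝ) * ((mx:ℝ)^2 * x + C * (mx:ℝ) * t)
        ≤ ((∑' i, a i) / ε') * ((mx:ℝ)^2 * x + C * (mx:ℝ) * t) :=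
      mul_le_mul_of_nonneg_right hNle hEpos
    have h9 : C * (∑' i, min (a i) ε') ≤ C * ∑' i, a i :=
      mul_le_mul_of_nonneg_left hmin_le hC0.le
    have h10 : ∑' r, Cq r ≤ C₀ * ∑' i, cs i := hCbound
    have h11 : C₀ * (∑' i, cs i) ≤ C * ∑' i, cs i :=
      mul_le_mul_of_nonneg_right hC₀C hcs0
    have h12 : C * (∑' i, cs i) = C * ((K:ℝ) * t + ∑' i, min (a i) ε') := by
      rw [htsum_cs]
    simp only
    rw [← hmxeq]
    rw [hNc] at hAtsum
    rw [hKc] at h12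
    have hAtsum' : tsum Aq ≤ (N:ℝ) * (mx:ℝ)^2 * x + ∑' r, Cq r := hAtsum
    have h8' : (N:ℝ) * ((mx:ℝ)^2*x) + (N:ℝ)*(C*(mx:ℝ)*t)
        ≤ (∑' i, a i) / ε' * ((mx:ℝ)^2*x) + (∑' i, a i)/ε'*(C*(mx:ℝ)*t) := by
      ring_nf
      ring_nf at h8
      linarith
    have hg : (((mx:ℝ)^2*x + C*(mx:ℝ)*t)/ε' + C) * ∑' n, a n
        = (∑' n, a n)/ε'*((mx:ℝ)^2*x) + (∑' n, a n)/ε'*(C*(mx:ℝ)*t) + C * ∑' n, a n := by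
      ring
    rw [hg]
    clear_value ε' t C x
    linarith [hAtsum', h8', h9, h10, h11, h12]


theorem stmt_13 (I : Set ℝ) (hne : I.Nonempty) (hconn : I.OrdConnected)
    (hIpos : I ⊆ Set.Ioi 0) (hInf : sInf I = 0)
    (f : ℝ → ℝ) (hf : ContinuousOn f I)
    (hmono : StrictMonoOn f I ∨ StrictAntiOn f I)
    (ε : ℝ) (hε : ε ∈ I)
    (hH : ∃ C : ℝ, ∀ a : ℕ → ℝ, (∀ n, a n ∈ Set.Ioo (0:ℝ) ε) → Summable a →
      Summable (fun n => qam f I (n + 1) (fun k : Fin (n + 1) => a (k : ℕ))) ∧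
      ∑' n, qam f I (n + 1) (fun k : Fin (n + 1) => a (k : ℕ)) ≤ C * ∑' n, a n) :
    ∃ c : ℝ → ℝ, (∀ x ∈ I, 0 < c x) ∧
      ∀ a : ℕ → ℝ, (∀ n, a n ∈ I) → Summable a →
        Summable (fun n => qam f I (n + 1) (fun k : Fin (n + 1) => a (k : ℕ))) ∧
        ∑' n, qam f I (n + 1) (fun k : Fin (n + 1) => a (k : ℕ)) ≤
          c (⨆ n, a n) * ∑' n, a n := by
  rcases hmono with hm | hanti
  · exact mono_main I hne hconn hIpos hInf f hf hm ε hε hH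
  · have hIoo : Set.Ioo (0:ℝ) ε ⊆ I := Ioo_subset_of_sInf hne hconn hIpos hInf hε
    have hinj : Set.InjOn f I := hanti.injOn
    have hgc : ContinuousOn (fun y => -f y) I := hf.neg
    have hgm : StrictMonoOn (fun y => -f y) I := fun u hu v hv huv =>
      neg_lt_neg (hanti hu hv huv)
    have hqeq : ∀ (b : ℕ → ℝ), (∀ i, b i ∈ I) →
        (fun n => qam (fun y => -f y) I (n + 1) (fun k : Fin (n + 1) => b (k : ℕ)))
          = fun n => qam f I (n + 1) (fun k : Fin (n + 1) => b (k : ℕ)) :=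
      fun b hb => funext fun n => qam_neg_eq hconn hf hinj b hb n
    have hH' : ∃ C : ℝ, ∀ a : ℕ → ℝ, (∀ n, a n ∈ Set.Ioo (0:ℝ) ε) → Summable a →
        Summable (fun n => qam (fun y => -f y) I (n + 1) (fun k : Fin (n + 1) => a (k : ℕ))) ∧
        ∑' n, qam (fun y => -f y) I (n + 1) (fun k : Fin (n + 1) => a (k : ℕ))
          ≤ C * ∑' n, a n := by
      obtain ⟨C, hC⟩ := hH
      refine ⟨C, fun b hb hs => ?_⟩
      rw [hqeq b (fun i => hIoo (hb i))]
      exact hC b hb hs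
    obtain ⟨c, hcpos, hc⟩ := mono_main I hne hconn hIpos hInf (fun y => -f y) hgc hgm ε hε hH'
    refine ⟨c, hcpos, fun b hb hs => ?_⟩
    rw [← hqeq b hb]
    exact hc b hb hs
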